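/- Let m ≥ 1 be an integer and write P_μ^m(η) = α + βη + γη² + δη³ (type IV₃); set R_m(μ) = (γ+δ)(β+γ+δ) − αδ, the Hurwitz determinant Δ₂ of P_μ^m. For m ≥ 3, R_m(μ) > 0 for all μ > 0. For m = 1 and m = 2, R_m has exactly one positive root ν_m, and ν_m > μ_m, where μ_m is the unique positive root of q_m(μ) = P_μ^m(1/2). In particular, R_m(μ)/((m+1)(m+2)μ³) = [3+(m−1)μ]·s_m(μ) with s₁(μ) = (31−6μ²)/2 and s₂(μ) = (97+66μ−16μ²)/4. -/
import Mathlib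


/-- Degree-0 coefficient `α` of the type `IV₃` representative polynomial. -/
noncomputable def coeffA (μ : ℝ) : ℝ := (1 - μ) * (2 - μ) * (3 / 2 - μ)

/-- Degree-1 coefficient `β` of the type `IV₃` representative polynomial. -/
noncomputable def coeffB (m : ℕ) (μ : ℝ) : ℝ :=
  ((m : ℝ) + 1) * μ * (1 - μ) * (13 / 2 - 7 * μ)

/-- Degree-2 coefficient `γ` of the type `IV₃` representative polynomial. -/
noncomputable def coeffC (m : ℕ) (μ : ℝ) : ℝ :=
  3 * ((m : ℝ) + 1) * ((m : ℝ) + 2) * (3 / 2 - 2 * μ) * μ ^ 2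

/-- Degree-3 coefficient `δ` of the type `IV₃` representative polynomial. -/
noncomputable def coeffD (m : ℕ) (μ : ℝ) : ℝ :=
  ((m : ℝ) + 1) * ((m : ℝ) + 2) * ((m : ℝ) + 3) * μ ^ 3

/-- Hurwitz determinant `Δ₂ = (γ+δ)(β+γ+δ) - αδ` of `P_μ^m` (type `IV₃`). -/
noncomputable def RIV3 (m : ℕ) (μ : ℝ) : ℝ :=
  (coeffC m μ + coeffD m μ) * (coeffB m μ + coeffC m μ + coeffD m μ) -
    coeffA μ * coeffD m μ

/-- `q_m(μ) = P_μ^m(1/2)` for type `IV₃`. -/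
noncomputable def qIV3 (m : ℕ) (μ : ℝ) : ℝ :=
  coeffA μ + coeffB m μ * (1 / 2) + coeffC m μ * (1 / 2) ^ 2 + coeffD m μ * (1 / 2) ^ 3

lemma RIV3_factor (m : ℕ) (μ : ℝ) :
    RIV3 m μ = ((m:ℝ)+1) * ((m:ℝ)+2) * μ^3 *
      ((81 + 105*(m:ℝ))/4 + (107*(m:ℝ)^2 - 26*(m:ℝ) - 81)/4 * μ
        + (18*(m:ℝ)^3 - 27*(m:ℝ)^2 - 18*(m:ℝ) + 9)/2 * μ^2
        + ((m:ℝ)^4 - 3*(m:ℝ)^3 + 2*(m:ℝ)) * μ^3) := by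
  simp only [RIV3, coeffA, coeffB, coeffC, coeffD]; ring

lemma RIV3_one (μ : ℝ) : RIV3 1 μ = 9 * μ^3 * (31 - 6*μ^2) := by
  have := RIV3_factor 1 μ; norm_num at this; rw [this]; ring

lemma RIV3_two (μ : ℝ) : RIV3 2 μ = 3 * μ^3 * (3 + μ) * (97 + 66*μ - 16*μ^2) := by
  have := RIV3_factor 2 μ; norm_num at this; rw [this]; ring

lemma qIV3_one (μ : ℝ) : qIV3 1 μ = 3 - 9/4 * μ^2 := by
  simp only [qIV3, coeffA, coeffB, coeffC, coeffD]; norm_num; ring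

lemma qIV3_two (μ : ℝ) : qIV3 2 μ = 3 + 13/4*μ - 9/4*μ^2 - μ^3 := by
  simp only [qIV3, coeffA, coeffB, coeffC, coeffD]; norm_num; ring

lemma root_one {ν : ℝ} (hν : 0 < ν) (h : RIV3 1 ν = 0) : ν = Real.sqrt (31/6) := by
  rw [RIV3_one] at h
  have h2 : 31 - 6*ν^2 = 0 := by
    rcases mul_eq_zero.mp h with h' | h'
    · nlinarith [pow_pos hν 3]
    · exact h'
  have hs : Real.sqrt (31/6) ^ 2 = 31/6 := Real.sq_sqrt (by norm_num)
  have hsp : 0 ≤ Real.sqrt (31/6) := Real.sqrt_nonneg _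
  nlinarith [sq_nonneg (ν - Real.sqrt (31/6)), sq_nonneg (ν + Real.sqrt (31/6))]

lemma sqrt2641_gt : 33 < Real.sqrt 2641 := by
  have h : Real.sqrt 2641 ^ 2 = 2641 := Real.sq_sqrt (by norm_num)
  nlinarith [Real.sqrt_nonneg (2641:ℝ)]

lemma root_two {ν : ℝ} (hν : 0 < ν) (h : RIV3 2 ν = 0) :
    ν = (33 + Real.sqrt 2641) / 16 := by
  rw [RIV3_two] at h
  have h2 : 97 + 66*ν - 16*ν^2 = 0 := by
    rcases mul_eq_zero.mp h with h' | h'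
    · exfalso
      rcases mul_eq_zero.mp h' with h'' | h''
      · nlinarith [pow_pos hν 3]
      · nlinarith [pow_pos hν 3]
    · exact h'
  have hs : Real.sqrt 2641 ^ 2 = 2641 := Real.sq_sqrt (by norm_num)
  have h33 := sqrt2641_gt
  -- (16ν - 33)² = 2641 = s², and 16ν - 33 + s > 0
  have key : (16*ν - 33 - Real.sqrt 2641) * (16*ν - 33 + Real.sqrt 2641) = 0 := by
    nlinarith
  rcases mul_eq_zero.mp key with h' | h'
  · linarith
  · linarith

/-- Hurwitz determinant `Δ₂` for type `IV₃`: positivity for `m ≥ 3`; for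
`m = 1, 2` a unique positive root `ν_m` exceeding the unique positive root
`μ_m` of `q_m`; moreover `R_m(μ)/((m+1)(m+2)μ³) = [3+(m-1)μ]·s_m(μ)` with
`s₁(μ) = (31-6μ²)/2` and `s₂(μ) = (97+66μ-16μ²)/4`. -/
theorem RIV3_sign :
    (∀ m : ℕ, 3 ≤ m → ∀ μ : ℝ, 0 < μ → 0 < RIV3 m μ) ∧
    (∀ m : ℕ, 1 ≤ m → m ≤ 2 → ∃! ν : ℝ, 0 < ν ∧ RIV3 m ν = 0) ∧
    (∀ m : ℕ, 1 ≤ m → m ≤ 2 → ∀ ν : ℝ, 0 < ν → RIV3 m ν = 0 →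
      ∀ μm : ℝ, 0 < μm → qIV3 m μm = 0 → μm < ν) ∧
    (∀ μ : ℝ, RIV3 1 μ =
      ((1 : ℝ) + 1) * ((1 : ℝ) + 2) * μ ^ 3 * (3 + ((1 : ℝ) - 1) * μ) *
        ((31 - 6 * μ ^ 2) / 2)) ∧
    (∀ μ : ℝ, RIV3 2 μ =
      ((2 : ℝ) + 1) * ((2 : ℝ) + 2) * μ ^ 3 * (3 + ((2 : ℝ) - 1) * μ) *
        ((97 + 66 * μ - 16 * μ ^ 2) / 4)) := by
  refine ⟨?_, ?_, ?_, ?_, ?_⟩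
  · -- positivity for m ≥ 3
    intro m hm μ hμ
    have hM : (3:ℝ) ≤ (m:ℝ) := by exact_mod_cast hm
    rw [RIV3_factor]
    have h0 : (0:ℝ) < (81 + 105*(m:ℝ))/4 := by nlinarith
    have h1 : (0:ℝ) < (107*(m:ℝ)^2 - 26*(m:ℝ) - 81)/4 := by nlinarith
    have h2 : (0:ℝ) < (18*(m:ℝ)^3 - 27*(m:ℝ)^2 - 18*(m:ℝ) + 9)/2 := by nlinarith
    have h3 : (0:ℝ) < (m:ℝ)^4 - 3*(m:ℝ)^3 + 2*(m:ℝ) := by nlinarith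
    have hμ2 : (0:ℝ) < μ^2 := by positivity
    have hμ3 : (0:ℝ) < μ^3 := by positivity
    have hin : (0:ℝ) < (81 + 105*(m:ℝ))/4 + (107*(m:ℝ)^2 - 26*(m:ℝ) - 81)/4 * μ
        + (18*(m:ℝ)^3 - 27*(m:ℝ)^2 - 18*(m:ℝ) + 9)/2 * μ^2
        + ((m:ℝ)^4 - 3*(m:ℝ)^3 + 2*(m:ℝ)) * μ^3 := by
      have := mul_pos h1 hμ
      have := mul_pos h2 hμ2
      have := mul_pos h3 hμ3
      linarith
    have hMp : (0:ℝ) < ((m:ℝ)+1) * ((m:ℝ)+2) := by nlinarith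
    positivity
  · -- unique positive root for m = 1, 2
    intro m h1 h2
    interval_cases m
    · refine ⟨Real.sqrt (31/6), ⟨Real.sqrt_pos.mpr (by norm_num), ?_⟩, ?_⟩
      · rw [RIV3_one]
        have hs : Real.sqrt (31/6) ^ 2 = 31/6 := Real.sq_sqrt (by norm_num)
        rw [hs]; ring
      · rintro y ⟨hy, hRy⟩; exact root_one hy hRy
    · refine ⟨(33 + Real.sqrt 2641) / 16, ⟨?_, ?_⟩, ?_⟩
      · have := sqrt2641_gt; linarith
      · have hs : Real.sqrt 2641 ^ 2 = 2641 := Real.sq_sqrt (by norm_num)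
        have hq : 97 + 66*((33 + Real.sqrt 2641) / 16) -
            16*((33 + Real.sqrt 2641) / 16)^2 = 0 := by
          linear_combination (-1/16 : ℝ) * hs
        rw [RIV3_two, hq, mul_zero]
      · rintro y ⟨hy, hRy⟩; exact root_two hy hRy
  · -- μm < ν
    intro m h1 h2 ν hν hR μm hμm hq
    interval_cases m
    · have hνe := root_one hν hR
      rw [qIV3_one] at hq
      have hs : Real.sqrt (31/6) ^ 2 = 31/6 := Real.sq_sqrt (by norm_num)
      have hsp : 0 ≤ Real.sqrt (31/6) := Real.sqrt_nonneg _
      subst hνe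
      nlinarith
    · have hνe := root_two hν hR
      rw [qIV3_two] at hq
      -- μm < 2 from the cubic equation, ν > 2
      have hμm2 : μm < 2 := by nlinarith
      have h33 := sqrt2641_gt
      rw [hνe]
      linarith
  · intro μ; rw [RIV3_one]; ring
  · intro μ; rw [RIV3_two]; ring
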